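/- There exists a positive real number α such that for every positive natural number n, ⌊αⁿ⌋ - n is an even integer. -/
import Mathlib

noncomputable def myA : ℝ := (3 + Real.sqrt 17) / 2
noncomputable def myB : ℝ := (3 - Real.sqrt 17) / 2

lemma sq17 : Real.sqrt 17 ^ 2 = 17 := Real.sq_sqrt (by norm_num)

lemma hA2 : myA ^ 2 = 3 * myA + 2 := by
  unfold myA; linear_combination sq17 / 4

lemma hB2 : myB ^ 2 = 3 * myB + 2 := by
  unfold myB; linear_combination sq17 / 4

def s : ℕ → ℤ
  | 0 => 2
  | 1 => 3
  | n + 2 => 3 * s (n + 1) + 2 * s n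

lemma s_real : ∀ n, (s n : ℝ) = myA ^ n + myB ^ n := by
  intro n
  induction n using Nat.twoStepInduction with
  | zero => norm_num [s]
  | one =>
      simp only [s, pow_one]
      unfold myA myB
      push_cast
      ring
  | more n ih1 ih2 =>
      show ((3 * s (n + 1) + 2 * s n : ℤ) : ℝ) = _
      push_cast [ih1, ih2]
      linear_combination (-(myA ^ n)) * hA2 + (-(myB ^ n)) * hB2

lemma s_odd : ∀ n, Odd (s (n + 1)) := by
  intro n
  induction n with
  | zero => exact ⟨1, rfl⟩
  | succ n ih =>
      obtain ⟨k, hk⟩ := ih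
      exact ⟨s n + 3 * k + 1, by show 3 * s (n + 1) + 2 * s n = _; rw [hk]; ring⟩

lemma hBneg : myB < 0 := by
  unfold myB
  nlinarith [sq17, Real.sqrt_nonneg 17]

lemma hBgt : -1 < myB := by
  unfold myB
  nlinarith [sq17, Real.sqrt_nonneg 17]

lemma hBabs : ∀ n : ℕ, n ≠ 0 → |myB ^ n| < 1 := by
  intro n hn
  rw [abs_pow]
  exact pow_lt_one₀ (abs_nonneg _) (abs_lt.2 ⟨hBgt, lt_trans hBneg one_pos⟩) hn

theorem stmt4 : ∃ α : ℝ, 0 < α ∧ ∀ n : ℕ, 0 < n → Even (⌊α ^ n⌋ - (n : ℤ)) := by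
  refine ⟨myA, ?_, ?_⟩
  · unfold myA; nlinarith [Real.sqrt_nonneg 17]
  intro n hn
  have hval : myA ^ n = (s n : ℝ) - myB ^ n := by
    rw [s_real n]; ring
  have habs := hBabs n (hn).ne'
  obtain ⟨k, hk⟩ : Odd (s n) := by
    obtain ⟨m, rfl⟩ := Nat.exists_eq_succ_of_ne_zero hn.ne'
    exact s_odd m
  rcases Nat.even_or_odd n with he | ho
  · -- n even: 0 < β^n < 1, floor = s n - 1
    have hpos : 0 < myB ^ n := he.pow_pos (ne_of_lt hBneg)
    have hlt : myB ^ n < 1 := lt_of_le_of_lt (le_abs_self _) habs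
    have hfl : ⌊myA ^ n⌋ = s n - 1 := by
      rw [Int.floor_eq_iff]
      constructor
      · push_cast; rw [hval]; linarith
      · push_cast; rw [hval]; linarith
    rw [hfl]
    obtain ⟨m, hm⟩ := he
    refine ⟨k - m, ?_⟩
    have hmz : (n : ℤ) = m + m := by exact_mod_cast hm
    omega
  · -- n odd: -1 < β^n < 0, floor = s n
    have hneg : myB ^ n < 0 := ho.pow_neg hBneg
    have hgt : -1 < myB ^ n := by
      have := (abs_lt.1 habs).1; linarith
    have hfl : ⌊myA ^ n⌋ = s n := by
      rw [Int.floor_eq_iff]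
      constructor
      · rw [hval]; linarith
      · rw [hval]; linarith
    rw [hfl]
    obtain ⟨m, hm⟩ := ho
    refine ⟨k - m, ?_⟩
    have hmz : (n : ℤ) = 2 * m + 1 := by exact_mod_cast hm
    omega
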